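/- For every integer m ≥ 2 there exists a function b : ℝ → ℝ such that supp(b) ⊆ [−2,2], b(x) = 1 for x ∈ [−1,1], b is m+1 times continuously differentiable, and there is an absolute constant A such that |b^{(k)}(x)| ≤ A(2m)^k for all k ≤ m. -/

import Mathlib

open MeasureTheory

/-! Auxiliary construction: iterated moving averages of an indicator function. -/

noncomputable def smoothT (c : ℝ) (f : ℝ → ℝ) : ℝ → ℝ :=
  fun x => (2 * c)⁻¹ * ∫ t in (x - c)..(x + c), f t

noncomputable def gseq (c : ℝ) : ℕ → (ℝ → ℝ)
  | 0 => Set.indicator (Set.Icc (-(3/2) : ℝ) (3/2)) (fun _ => 1)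
  | (j+1) => smoothT c (gseq c j)

lemma smoothT_hasDerivAt {c : ℝ} (hc : 0 < c) {f : ℝ → ℝ} (hf : Continuous f)
    (hi : Integrable f volume) (x : ℝ) :
    HasDerivAt (smoothT c f) ((2 * c)⁻¹ * (f (x + c) - f (x - c))) x := by
  have key : smoothT c f = fun y =>
      (2 * c)⁻¹ * ((∫ t in (0:ℝ)..(y + c), f t) - ∫ t in (0:ℝ)..(y - c), f t) := by
    funext y
    have h := intervalIntegral.integral_add_adjacent_intervals
      (hi.intervalIntegrable (a := 0) (b := y - c))
      (hi.intervalIntegrable (a := y - c) (b := y + c))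
    unfold smoothT
    rw [show (∫ t in (y - c)..(y + c), f t)
        = (∫ t in (0:ℝ)..(y + c), f t) - ∫ t in (0:ℝ)..(y - c), f t by linarith]
  rw [key]
  have hF : ∀ y : ℝ, HasDerivAt (fun u => ∫ t in (0:ℝ)..u, f t) (f y) y := fun y =>
    intervalIntegral.integral_hasDerivAt_right (hi.intervalIntegrable)
      (hf.stronglyMeasurableAtFilter _ _) hf.continuousAt
  have h1 : HasDerivAt (fun y : ℝ => ∫ t in (0:ℝ)..(y + c), f t) (f (x + c)) x := by
    have := (hF (x + c)).comp x ((hasDerivAt_id x).add_const c)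
    simpa [Function.comp_def] using this
  have h2 : HasDerivAt (fun y : ℝ => ∫ t in (0:ℝ)..(y - c), f t) (f (x - c)) x := by
    have := (hF (x - c)).comp x ((hasDerivAt_id x).sub_const c)
    simpa [Function.comp_def] using this
  exact (h1.sub h2).const_mul _

lemma smoothT_continuous {c : ℝ} {f : ℝ → ℝ} (hi : Integrable f volume) :
    Continuous (smoothT c f) := by
  have key : smoothT c f = fun y =>
      (2 * c)⁻¹ * ((∫ t in (0:ℝ)..(y + c), f t) - ∫ t in (0:ℝ)..(y - c), f t) := by
    funext y
    have h := intervalIntegral.integral_add_adjacent_intervals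
      (hi.intervalIntegrable (a := 0) (b := y - c))
      (hi.intervalIntegrable (a := y - c) (b := y + c))
    unfold smoothT
    rw [show (∫ t in (y - c)..(y + c), f t)
        = (∫ t in (0:ℝ)..(y + c), f t) - ∫ t in (0:ℝ)..(y - c), f t by linarith]
  rw [key]
  have hP : Continuous fun b => ∫ x in (0:ℝ)..b, f x := hi.continuous_primitive 0
  exact continuous_const.mul ((hP.comp (continuous_id.add continuous_const)).sub
    (hP.comp (continuous_id.sub continuous_const)))

lemma smoothT_nonneg {c : ℝ} (hc : 0 < c) {f : ℝ → ℝ} (hf : ∀ t, 0 ≤ f t) (x : ℝ) :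
    0 ≤ smoothT c f x := by
  apply mul_nonneg (by positivity)
  exact intervalIntegral.integral_nonneg (by linarith) (fun t _ => hf t)

lemma smoothT_le_one {c : ℝ} (hc : 0 < c) {f : ℝ → ℝ} (hi : Integrable f volume)
    (hf : ∀ t, f t ≤ 1) (x : ℝ) : smoothT c f x ≤ 1 := by
  have h : (∫ t in (x - c)..(x + c), f t) ≤ ∫ t in (x - c)..(x + c), (1:ℝ) := by
    apply intervalIntegral.integral_mono_on (by linarith) hi.intervalIntegrable
      intervalIntegrable_const (fun t _ => hf t)
  have h1 : (∫ t in (x - c)..(x + c), (1:ℝ)) = 2 * c := by simp; ring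
  unfold smoothT
  rw [inv_mul_le_iff₀ (by linarith : (0:ℝ) < 2 * c), mul_one]
  exact h1 ▸ h

lemma smoothT_eq_one {c : ℝ} (hc : 0 < c) {f : ℝ → ℝ}
    (hf : ∀ t ∈ Set.Icc (x - c) (x + c), f t = 1) : smoothT c f x = 1 := by
  unfold smoothT
  have h : (∫ t in (x - c)..(x + c), f t) = ∫ t in (x - c)..(x + c), (1:ℝ) := by
    apply intervalIntegral.integral_congr
    intro t ht
    rw [Set.uIcc_of_le (by linarith)] at ht
    exact hf t ht
  rw [h]
  simp only [intervalIntegral.integral_const, smul_eq_mul, mul_one]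
  rw [show x + c - (x - c) = 2 * c by ring]
  field_simp

lemma smoothT_eq_zero {c : ℝ} (hc : 0 < c) {f : ℝ → ℝ} {x : ℝ}
    (hf : ∀ t ∈ Set.Icc (x - c) (x + c), f t = 0) : smoothT c f x = 0 := by
  unfold smoothT
  have h : (∫ t in (x - c)..(x + c), f t) = ∫ t in (x - c)..(x + c), (0:ℝ) := by
    apply intervalIntegral.integral_congr
    intro t ht
    rw [Set.uIcc_of_le (by linarith)] at ht
    exact hf t ht
  rw [h]
  simp

/-- Main invariants of the iterated averages. -/
lemma gseq_props {c : ℝ} (hc : 0 < c) (j : ℕ) :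
    Integrable (gseq c j) volume ∧ (∀ x, 0 ≤ gseq c j x) ∧ (∀ x, gseq c j x ≤ 1) ∧
    (∀ x : ℝ, -(3/2) + j * c ≤ x → x ≤ 3/2 - j * c → gseq c j x = 1) ∧
    (∀ x : ℝ, x < -(3/2) - j * c ∨ 3/2 + j * c < x → gseq c j x = 0) ∧
    (1 ≤ j → Continuous (gseq c j)) := by
  induction j with
  | zero =>
    refine ⟨?_, ?_, ?_, ?_, ?_, by omega⟩
    · rw [show gseq c 0 = Set.indicator (Set.Icc (-(3/2) : ℝ) (3/2)) (fun _ => 1) from rfl,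
        integrable_indicator_iff measurableSet_Icc]
      exact integrableOn_const measure_Icc_lt_top.ne
    · intro x
      exact Set.indicator_nonneg (fun _ _ => zero_le_one) x
    · intro x
      exact Set.indicator_le_self' (fun _ _ => zero_le_one) x |>.trans (le_refl _) |>.trans le_rfl
    · intro x h1 h2
      simp only [Nat.cast_zero, zero_mul] at h1 h2
      apply Set.indicator_of_mem
      exact Set.mem_Icc.2 ⟨by linarith, by linarith⟩
    · intro x hx
      apply Set.indicator_of_notMem
      simp only [Nat.cast_zero, zero_mul] at hx
      simp only [Set.mem_Icc]
      intro hmem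
      obtain ⟨h1, h2⟩ := hmem
      rcases hx with h | h <;> linarith
  | succ j ih =>
    obtain ⟨hint, h0, h1, hpl, hsupp, _⟩ := ih
    have hcont : Continuous (gseq c (j+1)) := smoothT_continuous hint
    have hz : ∀ x : ℝ, x < -(3/2) - (j+1 : ℕ) * c ∨ 3/2 + (j+1 : ℕ) * c < x →
        gseq c (j+1) x = 0 := by
      intro x hx
      apply smoothT_eq_zero hc
      intro t ht
      apply hsupp
      push_cast at hx ⊢
      rcases hx with h | h
      · left; rcases ht with ⟨ht1, ht2⟩; linarith
      · right; rcases ht with ⟨ht1, ht2⟩; linarith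
    refine ⟨?_, ?_, ?_, ?_, hz, fun _ => hcont⟩
    · apply hcont.integrable_of_hasCompactSupport
      apply HasCompactSupport.intro (isCompact_Icc
        (a := -(3/2) - (j+1 : ℕ) * c) (b := 3/2 + (j+1 : ℕ) * c))
      intro x hx
      apply hz
      simp only [Set.mem_Icc, not_and_or, not_le] at hx
      tauto
    · intro x
      exact smoothT_nonneg hc h0 x
    · intro x
      exact smoothT_le_one hc hint h1 x
    · intro x hx1 hx2
      apply smoothT_eq_one hc
      intro t ht
      apply hpl
      · push_cast at hx1; rcases ht with ⟨ht1, _⟩; push_cast; linarith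
      · push_cast at hx2; rcases ht with ⟨_, ht2⟩; push_cast; linarith

/-- Translate-and-scale commutation for iterated derivatives. -/
lemma iter_combo (a c : ℝ) : ∀ (k : ℕ) (f : ℝ → ℝ), ContDiff ℝ k f → ∀ x : ℝ,
    iteratedDeriv k (fun y => a * (f (y + c) - f (y - c))) x
      = a * (iteratedDeriv k f (x + c) - iteratedDeriv k f (x - c)) := by
  intro k
  induction k with
  | zero => intro f _ x; simp
  | succ k ih =>
    intro f hf x
    have hf' : Differentiable ℝ f := hf.differentiable (by simp)
    have hfd : ContDiff ℝ k (deriv f) := by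
      rw [show ((k+1 : ℕ) : WithTop ℕ∞) = (k : WithTop ℕ∞) + 1 by push_cast; ring,
        contDiff_succ_iff_deriv] at hf
      exact hf.2.2
    have hderiv : deriv (fun y => a * (f (y + c) - f (y - c)))
        = fun y => a * (deriv f (y + c) - deriv f (y - c)) := by
      funext y
      have d1 : HasDerivAt (fun y : ℝ => f (y + c)) (deriv f (y + c)) y := by
        have := ((hf'.differentiableAt (x := y + c)).hasDerivAt).comp y
          ((hasDerivAt_id y).add_const c)
        simpa [Function.comp_def] using this
      have d2 : HasDerivAt (fun y : ℝ => f (y - c)) (deriv f (y - c)) y := by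
        have := ((hf'.differentiableAt (x := y - c)).hasDerivAt).comp y
          ((hasDerivAt_id y).sub_const c)
        simpa [Function.comp_def] using this
      exact (((d1.sub d2).const_mul a)).deriv
    rw [iteratedDeriv_succ', hderiv, ih (deriv f) hfd x, iteratedDeriv_succ']

/-- Smoothness and derivative bounds for `gseq`. -/
lemma gseq_smooth {c : ℝ} (hc : 0 < c) : ∀ (k : ℕ) (j : ℕ), 1 ≤ j →
    ContDiff ℝ k (gseq c (j + k)) ∧
    ∀ x, |iteratedDeriv k (gseq c (j + k)) x| ≤ (c⁻¹) ^ k := by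
  intro k
  induction k with
  | zero =>
    intro j hj
    obtain ⟨_, h0, h1, _, _, hcont⟩ := gseq_props hc j
    refine ⟨contDiff_zero.2 (by simpa using hcont hj), fun x => ?_⟩
    simp only [iteratedDeriv_zero, pow_zero]
    rw [abs_le]
    constructor
    · have := h0 x; simp only [Nat.add_zero]; linarith
    · have := h1 x; simp only [Nat.add_zero]; linarith
  | succ k ih =>
    intro j hj
    obtain ⟨hintk, h0k, h1k, _, _, hcontk⟩ := gseq_props hc (j + k)
    have hcontk' : Continuous (gseq c (j + k)) := hcontk (by omega)
    obtain ⟨hk, hbk⟩ := ih j hj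
    have heq : gseq c (j + (k+1)) = smoothT c (gseq c (j + k)) := by
      rw [show j + (k+1) = (j + k) + 1 by ring]
      rfl
    have hd : ∀ x, HasDerivAt (gseq c (j + (k+1)))
        ((2 * c)⁻¹ * (gseq c (j + k) (x + c) - gseq c (j + k) (x - c))) x := by
      intro x
      rw [heq]
      exact smoothT_hasDerivAt hc hcontk' hintk x
    have hderiv : deriv (gseq c (j + (k+1)))
        = fun x => (2 * c)⁻¹ * (gseq c (j + k) (x + c) - gseq c (j + k) (x - c)) :=
      funext fun x => (hd x).deriv
    have hdiff : Differentiable ℝ (gseq c (j + (k+1))) := fun x => (hd x).differentiableAt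
    have hcd : ContDiff ℝ k (deriv (gseq c (j + (k+1)))) := by
      rw [hderiv]
      exact contDiff_const.mul ((hk.comp (contDiff_id.add contDiff_const)).sub
        (hk.comp (contDiff_id.sub contDiff_const)))
    constructor
    · rw [show ((k+1 : ℕ) : WithTop ℕ∞) = (k : WithTop ℕ∞) + 1 by push_cast; ring,
        contDiff_succ_iff_deriv]
      exact ⟨hdiff, by simp, hcd⟩
    · intro x
      rw [iteratedDeriv_succ', hderiv,
        iter_combo ((2 * c)⁻¹) c k (gseq c (j + k)) hk x]
      have b1 := hbk (x + c)
      have b2 := hbk (x - c)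
      have habs : |iteratedDeriv k (gseq c (j + k)) (x + c)
          - iteratedDeriv k (gseq c (j + k)) (x - c)| ≤ 2 * (c⁻¹) ^ k := by
        calc _ ≤ |iteratedDeriv k (gseq c (j + k)) (x + c)|
            + |iteratedDeriv k (gseq c (j + k)) (x - c)| := abs_sub _ _
        _ ≤ 2 * (c⁻¹) ^ k := by linarith
      rw [abs_mul]
      calc |(2 * c)⁻¹| * |iteratedDeriv k (gseq c (j + k)) (x + c)
          - iteratedDeriv k (gseq c (j + k)) (x - c)|
          ≤ (2 * c)⁻¹ * (2 * (c⁻¹) ^ k) := by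
            apply mul_le_mul (le_of_eq (abs_of_pos (by positivity))) habs (abs_nonneg _)
              (by positivity)
        _ = (c⁻¹) ^ (k + 1) := by
            rw [pow_succ]
            field_simp
      
theorem exists_plateau_bump :
    ∃ A : ℝ, 0 < A ∧ ∀ m : ℕ, 2 ≤ m →
      ∃ b : ℝ → ℝ,
        Function.support b ⊆ Set.Icc (-2 : ℝ) 2 ∧
        (∀ x ∈ Set.Icc (-1 : ℝ) 1, b x = 1) ∧
        ContDiff ℝ (m + 1) b ∧
        ∀ k ≤ m, ∀ x : ℝ, |iteratedDeriv k b x| ≤ A * (2 * (m : ℝ)) ^ k := by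
  refine ⟨Real.exp 2, Real.exp_pos 2, fun m hm => ?_⟩
  set c : ℝ := (2 * ((m : ℝ) + 2))⁻¹ with hc_def
  have hm2 : (2:ℝ) ≤ (m:ℝ) := by exact_mod_cast hm
  have hc : 0 < c := by positivity
  have hnc : ((m:ℝ) + 2) * c = 1/2 := by
    rw [hc_def]; field_simp
  refine ⟨gseq c (m + 2), ?_, ?_, ?_, ?_⟩
  · -- support
    obtain ⟨_, _, _, _, hsupp, _⟩ := gseq_props hc (m + 2)
    intro x hx
    simp only [Function.mem_support] at hx
    by_contra hmem
    simp only [Set.mem_Icc, not_and_or, not_le] at hmem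
    apply hx
    apply hsupp
    push_cast
    rcases hmem with h | h
    · left; nlinarith [hnc]
    · right; nlinarith [hnc]
  · -- plateau
    obtain ⟨_, _, _, hpl, _, _⟩ := gseq_props hc (m + 2)
    intro x hx
    rcases hx with ⟨hx1, hx2⟩
    apply hpl <;> push_cast <;> nlinarith [hnc]
  · -- smoothness
    have := (gseq_smooth hc (m + 1) 1 le_rfl).1
    rw [show 1 + (m + 1) = m + 2 by ring] at this
    exact_mod_cast this
  · -- derivative bounds
    intro k hk x
    have hj : 1 ≤ m + 2 - k := by omega
    have := (gseq_smooth hc k (m + 2 - k) hj).2 x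
    rw [show m + 2 - k + k = m + 2 by omega] at this
    refine this.trans ?_
    have hcinv : c⁻¹ = 2 * ((m:ℝ) + 2) := by rw [hc_def, inv_inv]
    rw [hcinv]
    have key : (2 * ((m:ℝ) + 2)) ^ k ≤ Real.exp 2 * (2 * (m:ℝ)) ^ k := by
      have h1 : (2 * ((m:ℝ) + 2)) = (2 * (m:ℝ)) * (1 + 2 / m) := by
        field_simp
      rw [h1, mul_pow]
      have h2 : (1 + 2 / (m:ℝ)) ^ k ≤ Real.exp 2 := by
        have h3 : (1 + 2 / (m:ℝ)) ≤ Real.exp (2 / m) := by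
          have := Real.add_one_le_exp (2 / (m:ℝ))
          linarith
        calc (1 + 2 / (m:ℝ)) ^ k ≤ (Real.exp (2 / m)) ^ k :=
              pow_le_pow_left₀ (by positivity) h3 k
          _ = Real.exp ((2 / m) * k) := by
              rw [← Real.exp_nat_mul]; ring_nf
          _ ≤ Real.exp 2 := by
              apply Real.exp_le_exp.2
              rw [div_mul_eq_mul_div, div_le_iff₀ (by linarith)]
              have : (k:ℝ) ≤ (m:ℝ) := by exact_mod_cast hk
              nlinarith
      calc (2 * (m:ℝ)) ^ k * (1 + 2 / m) ^ k
          ≤ (2 * (m:ℝ)) ^ k * Real.exp 2 := by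
            apply mul_le_mul_of_nonneg_left h2 (by positivity)
        _ = Real.exp 2 * (2 * (m:ℝ)) ^ k := by ring
    exact key
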